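/- Every 3-uniform hypergraph on n vertices with no 4 edges spanning at most 6 vertices has at most (3/14)·n² edges. -/

import Mathlib

open Finset

namespace Stmt14

variable {n : ℕ}

/-- codegree of a pair `p` in the 3-graph `G` -/
def deg (G : Finset (Finset (Fin n))) (p : Finset (Fin n)) : ℕ :=
  (G.filter (fun e => p ⊆ e)).card

/-- `e` has at least two heavy (codegree ≥ 2) pairs -/
def Multi (G : Finset (Finset (Fin n))) (e : Finset (Fin n)) : Prop :=
  ∃ p ∈ e.powersetCard 2, ∃ q ∈ e.powersetCard 2, p ≠ q ∧ 2 ≤ deg G p ∧ 2 ≤ deg G q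

instance (G : Finset (Finset (Fin n))) : DecidablePred (Multi G) := by
  unfold Multi; intro e; infer_instance

/-- a pair transferring charge -/
def Trans (G : Finset (Finset (Fin n))) (p : Finset (Fin n)) : Prop :=
  deg G p = 2 ∧ (∃ e ∈ G, p ⊆ e ∧ Multi G e) ∧ (∃ f ∈ G, p ⊆ f ∧ ¬ Multi G f)

instance (G : Finset (Finset (Fin n))) : DecidablePred (Trans G) := by
  unfold Trans; intro e; infer_instance

/-- an isolated 4-set carrying exactly three edges -/
def GoodQuad (G : Finset (Finset (Fin n))) (S : Finset (Fin n)) : Prop :=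
  S.card = 4 ∧ (∀ h ∈ G, (h ∩ S).Nonempty → h ⊆ S) ∧
    (G.filter (fun h => h ⊆ S)).card = 3

instance (G : Finset (Finset (Fin n))) : DecidablePred (GoodQuad G) := by
  unfold GoodQuad; intro e; infer_instance

/-- a multi edge having a multi neighbour -/
def Bad (G : Finset (Finset (Fin n))) (e : Finset (Fin n)) : Prop :=
  Multi G e ∧ ∃ f ∈ G, Multi G f ∧ f ≠ e ∧ 2 ≤ (e ∩ f).card

instance (G : Finset (Finset (Fin n))) : DecidablePred (Bad G) := by
  unfold Bad; intro e; infer_instance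

lemma one_le_deg {G : Finset (Finset (Fin n))} {e p : Finset (Fin n)}
    (he : e ∈ G) (hp : p ⊆ e) : 1 ≤ deg G p := by
  have : e ∈ G.filter (fun e => p ⊆ e) := mem_filter.2 ⟨he, hp⟩
  exact card_pos.2 ⟨e, this⟩

lemma eq_insert_of_card_succ {α : Type*} [DecidableEq α] {s t : Finset α}
    (hst : s ⊆ t) (h : t.card = s.card + 1) : ∃ a, a ∉ s ∧ t = insert a s := by
  have h1 : (t \ s).card = 1 := by
    rw [card_sdiff_of_subset hst, h]; omega
  obtain ⟨a, ha⟩ := card_eq_one.1 h1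
  have has : a ∉ s := by
    have : a ∈ t \ s := ha ▸ mem_singleton_self a
    exact (mem_sdiff.1 this).2
  refine ⟨a, has, ?_⟩
  apply Finset.Subset.antisymm
  · intro x hx
    by_cases hxs : x ∈ s
    · exact mem_insert_of_mem hxs
    · have : x ∈ t \ s := mem_sdiff.2 ⟨hx, hxs⟩
      rw [ha, mem_singleton] at this
      exact this ▸ mem_insert_self a s
  · intro x hx
    rcases mem_insert.1 hx with rfl | hxs
    · have : x ∈ t \ s := ha ▸ mem_singleton_self x
      exact (mem_sdiff.1 this).1
    · exact hst hxs

/-- the three 2-subsets of a 3-set -/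
lemma pair_classify {α : Type*} [DecidableEq α] {x y z : α} {r : Finset α}
    (hxy : x ≠ y) (hxz : x ≠ z) (hyz : y ≠ z)
    (hr : r ⊆ ({x, y, z} : Finset α)) (hr2 : r.card = 2) :
    r = {x, y} ∨ r = {x, z} ∨ r = {y, z} := by
  obtain ⟨u, v, huv, rfl⟩ := card_eq_two.1 hr2
  have hu : u ∈ ({x, y, z} : Finset α) := hr (by simp)
  have hv : v ∈ ({x, y, z} : Finset α) := hr (by simp)
  simp only [mem_insert, mem_singleton] at hu hv
  have hcomm : ∀ a b : α, ({a, b} : Finset α) = {b, a} := fun a b => pair_comm a b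
  rcases hu with rfl | rfl | rfl <;> rcases hv with rfl | rfl | rfl <;>
    simp_all <;> tauto

/-- codegree is at most 3 -/
lemma deg_le_three {G : Finset (Finset (Fin n))}
    (h3 : ∀ e ∈ G, e.card = 3)
    (hfree64 : ∀ e₁ ∈ G, ∀ e₂ ∈ G, ∀ e₃ ∈ G, ∀ e₄ ∈ G,
      e₁ ≠ e₂ → e₁ ≠ e₃ → e₁ ≠ e₄ → e₂ ≠ e₃ → e₂ ≠ e₄ → e₃ ≠ e₄ →
        6 < (e₁ ∪ e₂ ∪ e₃ ∪ e₄).card)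
    {p : Finset (Fin n)} (hp : p.card = 2) : deg G p ≤ 3 := by
  by_contra hd
  push_neg at hd
  have h4 : 4 ≤ (G.filter (fun e => p ⊆ e)).card := hd
  obtain ⟨t, hts, ht4⟩ := Finset.exists_subset_card_eq h4
  obtain ⟨e₁, he₁t⟩ := Finset.card_pos.1 (by omega : 0 < t.card)
  have ht3 : (t.erase e₁).card = 3 := by rw [card_erase_of_mem he₁t, ht4]
  obtain ⟨e₂, e₃, e₄, h23, h24, h34, herase⟩ := Finset.card_eq_three.1 ht3
  have h2t : e₂ ∈ t.erase e₁ := by rw [herase]; simp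
  have h3t : e₃ ∈ t.erase e₁ := by rw [herase]; simp
  have h4t : e₄ ∈ t.erase e₁ := by rw [herase]; simp
  have h12 : e₁ ≠ e₂ := fun h => (mem_erase.1 h2t).1 h.symm
  have h13 : e₁ ≠ e₃ := fun h => (mem_erase.1 h3t).1 h.symm
  have h14 : e₁ ≠ e₄ := fun h => (mem_erase.1 h4t).1 h.symm
  have hsub4 : ({e₁, e₂, e₃, e₄} : Finset (Finset (Fin n))) ⊆ t := by
    intro e he
    simp only [mem_insert, mem_singleton] at he
    rcases he with rfl | rfl | rfl | rfl
    · exact he₁t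
    · exact mem_of_mem_erase h2t
    · exact mem_of_mem_erase h3t
    · exact mem_of_mem_erase h4t
  have hmem : ∀ e ∈ ({e₁, e₂, e₃, e₄} : Finset (Finset (Fin n))), e ∈ G ∧ p ⊆ e := by
    intro e he
    have := hts (hsub4 he)
    exact ⟨(mem_filter.1 this).1, (mem_filter.1 this).2⟩
  have he₁ := hmem e₁ (by simp); have he₂ := hmem e₂ (by simp)
  have he₃ := hmem e₃ (by simp); have he₄ := hmem e₄ (by simp)
  have key := hfree64 e₁ he₁.1 e₂ he₂.1 e₃ he₃.1 e₄ he₄.1 h12 h13 h14 h23 h24 h34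
  have hsub : e₁ ∪ e₂ ∪ e₃ ∪ e₄ ⊆ p ∪ (e₁ \ p) ∪ (e₂ \ p) ∪ (e₃ \ p) ∪ (e₄ \ p) := by
    intro a ha
    simp only [mem_union, mem_sdiff] at ha ⊢
    by_cases hap : a ∈ p
    · tauto
    · tauto
  have hc : ∀ e ∈ G, p ⊆ e → (e \ p).card = 1 := by
    intro e heG hpe
    rw [card_sdiff_of_subset hpe, h3 e heG, hp]
  have : (e₁ ∪ e₂ ∪ e₃ ∪ e₄).card ≤ 6 := by
    calc (e₁ ∪ e₂ ∪ e₃ ∪ e₄).card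
        ≤ (p ∪ (e₁ \ p) ∪ (e₂ \ p) ∪ (e₃ \ p) ∪ (e₄ \ p)).card := card_le_card hsub
      _ ≤ p.card + (e₁ \ p).card + (e₂ \ p).card + (e₃ \ p).card + (e₄ \ p).card := by
          refine le_trans (card_union_le _ _) (Nat.add_le_add_right ?_ _)
          refine le_trans (card_union_le _ _) (Nat.add_le_add_right ?_ _)
          refine le_trans (card_union_le _ _) (Nat.add_le_add_right ?_ _)
          exact card_union_le _ _
      _ ≤ 2 + 1 + 1 + 1 + 1 := by
          rw [hp, hc e₁ he₁.1 he₁.2, hc e₂ he₂.1 he₂.2, hc e₃ he₃.1 he₃.2, hc e₄ he₄.1 he₄.2]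
      _ = 6 := by norm_num
  omega

set_option maxHeartbeats 1000000 in
lemma struct {G : Finset (Finset (Fin n))}
    (h3 : ∀ e ∈ G, e.card = 3)
    (hfree64 : ∀ e₁ ∈ G, ∀ e₂ ∈ G, ∀ e₃ ∈ G, ∀ e₄ ∈ G,
      e₁ ≠ e₂ → e₁ ≠ e₃ → e₁ ≠ e₄ → e₂ ≠ e₃ → e₂ ≠ e₄ → e₃ ≠ e₄ →
        6 < (e₁ ∪ e₂ ∪ e₃ ∪ e₄).card)
    {e p q : Finset (Fin n)} (he : e ∈ G)
    (hp : p ∈ e.powersetCard 2) (hq : q ∈ e.powersetCard 2) (hpq : p ≠ q)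
    (hp2 : 2 ≤ deg G p) (hq2 : 2 ≤ deg G q) :
    deg G p = 2 ∧ deg G q = 2 ∧
    (∀ r ∈ e.powersetCard 2, r ≠ p → r ≠ q → deg G r = 1) ∧
    ((∃ S, e ⊆ S ∧ GoodQuad G S) ∨
      ((∀ f ∈ G, f ≠ e → p ⊆ f → ¬ Multi G f) ∧
       (∀ g ∈ G, g ≠ e → q ⊆ g → ¬ Multi G g))) := by
  obtain ⟨hpe, hp2c⟩ := mem_powersetCard.1 hp
  obtain ⟨hqe, hq2c⟩ := mem_powersetCard.1 hq
  have he3 : e.card = 3 := h3 e he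
  -- partners f and g
  obtain ⟨f, hfmem, hfe⟩ := exists_mem_ne (by exact lt_of_lt_of_le one_lt_two hp2 : 1 < (G.filter (fun h => p ⊆ h)).card) e
  have hfG : f ∈ G := (mem_filter.1 hfmem).1
  have hpf : p ⊆ f := (mem_filter.1 hfmem).2
  obtain ⟨g, hgmem, hge⟩ := exists_mem_ne (by exact lt_of_lt_of_le one_lt_two hq2 : 1 < (G.filter (fun h => q ⊆ h)).card) e
  have hgG : g ∈ G := (mem_filter.1 hgmem).1
  have hqg : q ⊆ g := (mem_filter.1 hgmem).2
  -- coordinates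
  have hinter1 : (p ∩ q).card = 1 := by
    have hle : (p ∩ q).card ≤ 1 := by
      by_contra hc
      push_neg at hc
      have h1 : p ∩ q = p := eq_of_subset_of_card_le (inter_subset_left) (by omega)
      have h2 : p ∩ q = q := by
        apply eq_of_subset_of_card_le (inter_subset_right)
        rw [hq2c]; omega
      exact hpq (h1 ▸ h2)
    have := card_union_add_card_inter p q
    have hun : (p ∪ q).card ≤ 3 := he3 ▸ card_le_card (union_subset hpe hqe)
    omega
  have hpq_union : p ∪ q = e := by
    apply eq_of_subset_of_card_le (union_subset hpe hqe)
    have := card_union_add_card_inter p q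
    omega
  obtain ⟨x, hx⟩ := card_eq_one.1 hinter1
  have hxp : x ∈ p := (mem_inter.1 (hx ▸ mem_singleton_self x)).1
  have hxq : x ∈ q := (mem_inter.1 (hx ▸ mem_singleton_self x)).2
  obtain ⟨y, hy⟩ := card_eq_one.1 (by rw [card_erase_of_mem hxp, hp2c] : (p.erase x).card = 1)
  have hpxy : p = ({x, y} : Finset (Fin n)) := by rw [← insert_erase hxp, hy]
  have hyx : y ≠ x := (mem_erase.1 (hy ▸ mem_singleton_self y)).1
  obtain ⟨z, hz⟩ := card_eq_one.1 (by rw [card_erase_of_mem hxq, hq2c] : (q.erase x).card = 1)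
  have hqxz : q = ({x, z} : Finset (Fin n)) := by rw [← insert_erase hxq, hz]
  have hzx : z ≠ x := (mem_erase.1 (hz ▸ mem_singleton_self z)).1
  have hyz : y ≠ z := by
    intro h
    exact hpq (by rw [hpxy, hqxz, h])
  have hexyz : e = ({x, y, z} : Finset (Fin n)) := by
    rw [← hpq_union, hpxy, hqxz]
    ext t; simp only [mem_union, mem_insert, mem_singleton]; tauto
  have hxe : x ∈ e := hpe hxp
  have hye : y ∈ e := by rw [hexyz]; simp
  have hze : z ∈ e := by rw [hexyz]; simp
  -- a, b
  obtain ⟨a, hap, hfa⟩ := eq_insert_of_card_succ hpf (by rw [h3 f hfG, hp2c])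
  have hax : a ≠ x := fun h => hap (h ▸ hxp)
  have hay : a ≠ y := fun h => hap (by rw [hpxy, h]; simp)
  have haz : a ≠ z := by
    intro h
    apply hfe
    rw [hfa, h, hpxy, hexyz]
    ext t; simp only [mem_insert, mem_singleton]; tauto
  have hae : a ∉ e := by rw [hexyz]; simp [hax, hay, haz]
  obtain ⟨b, hbq, hgb⟩ := eq_insert_of_card_succ hqg (by rw [h3 g hgG, hq2c])
  have hbx : b ≠ x := fun h => hbq (h ▸ hxq)
  have hbz : b ≠ z := fun h => hbq (by rw [hqxz, h]; simp)
  have hby : b ≠ y := by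
    intro h
    apply hge
    rw [hgb, h, hqxz, hexyz]
    ext t; simp only [mem_insert, mem_singleton]; tauto
  have hbe : b ∉ e := by rw [hexyz]; simp [hbx, hby, hbz]
  -- memberships in f and g
  have hyf : y ∈ f := hpf (by rw [hpxy]; simp)
  have hxf : x ∈ f := hpf hxp
  have hzg : z ∈ g := hqg (by rw [hqxz]; simp)
  have hxg : x ∈ g := hqg hxq
  have hmemf : ∀ t, t ∈ f ↔ t = a ∨ t = x ∨ t = y := by
    intro t; rw [hfa, hpxy]; simp
  have hmemg : ∀ t, t ∈ g ↔ t = b ∨ t = x ∨ t = z := by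
    intro t; rw [hgb, hqxz]; simp
  have hmeme : ∀ t, t ∈ e ↔ t = x ∨ t = y ∨ t = z := by
    intro t; rw [hexyz]; simp
  have hzf : z ∉ f := by rw [hmemf]; push_neg; exact ⟨fun h => haz h.symm, fun h => hzx h, fun h => hyz h.symm⟩
  have hyg : y ∉ g := by rw [hmemg]; push_neg; exact ⟨fun h => hby h.symm, hyx, hyz⟩
  have hfg : f ≠ g := fun h => hyg (h ▸ hyf)
  have hef : e ≠ f := hfe.symm
  have heg : e ≠ g := hge.symm
  by_cases hab : a = b
  · -- 4-point case
    subst hab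
    set S : Finset (Fin n) := insert a e with hS
    have hags : a ∈ g := by rw [hgb]; simp
    have hcardS : S.card = 4 := by rw [hS, card_insert_of_notMem hae, he3]
    have heS : e ⊆ S := subset_insert _ _
    have hfS : f ⊆ S := by
      rw [hfa]
      exact insert_subset (mem_insert_self _ _) (hpe.trans heS)
    have hgS : g ⊆ S := by
      rw [hgb]
      exact insert_subset (mem_insert_self _ _) (hqe.trans heS)
    have claimH : ∀ h ∈ G, (h ∩ S).Nonempty → h = e ∨ h = f ∨ h = g := by
      intro h hh hne
      by_contra hcon
      push_neg at hcon
      obtain ⟨hhe, hhf, hhg⟩ := hcon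
      have key := hfree64 e he f hfG g hgG h hh hef heg (Ne.symm hhe) hfg (Ne.symm hhf) (Ne.symm hhg)
      have hsub : e ∪ f ∪ g ∪ h ⊆ S ∪ h := by
        intro t ht
        simp only [mem_union] at ht ⊢
        rcases ht with ((ht | ht) | ht) | ht
        · exact Or.inl (heS ht)
        · exact Or.inl (hfS ht)
        · exact Or.inl (hgS ht)
        · exact Or.inr ht
      have h1 : 1 ≤ (S ∩ h).card := by
        rw [inter_comm]
        exact card_pos.2 hne
      have h2 := card_union_add_card_inter S h
      have h3' : h.card = 3 := h3 h hh
      have : (e ∪ f ∪ g ∪ h).card ≤ 6 := by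
        have := card_le_card hsub
        omega
      omega
    have hsubpair : ∀ (w : Finset (Fin n)), w ⊆ e → w.Nonempty → ∀ h ∈ G, w ⊆ h → h = e ∨ h = f ∨ h = g := by
      intro w hwe hwne h hh hwh
      obtain ⟨t, htw⟩ := hwne
      exact claimH h hh ⟨t, mem_inter.2 ⟨hwh htw, heS (hwe htw)⟩⟩
    have hdegp : deg G p = 2 := by
      apply le_antisymm _ hp2
      have hsub : G.filter (fun h => p ⊆ h) ⊆ {e, f} := by
        intro h hmem
        obtain ⟨hh, hph⟩ := mem_filter.1 hmem
        rcases hsubpair p hpe (card_pos.1 (by omega)) h hh hph with rfl | rfl | rfl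
        · simp
        · simp
        · exact absurd (hph (by rw [hpxy]; simp)) hyg
      exact (card_le_card hsub).trans ((card_insert_le _ _).trans (by simp))
    have hdegq : deg G q = 2 := by
      apply le_antisymm _ hq2
      have hsub : G.filter (fun h => q ⊆ h) ⊆ {e, g} := by
        intro h hmem
        obtain ⟨hh, hqh⟩ := mem_filter.1 hmem
        rcases hsubpair q hqe (card_pos.1 (by omega)) h hh hqh with rfl | rfl | rfl
        · simp
        · exact absurd (hqh (by rw [hqxz]; simp)) hzf
        · simp
      exact (card_le_card hsub).trans ((card_insert_le _ _).trans (by simp))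
    refine ⟨hdegp, hdegq, ?_, ?_⟩
    · intro r hr hrp hrq
      obtain ⟨hre, hr2⟩ := mem_powersetCard.1 hr
      have : r = {x, y} ∨ r = {x, z} ∨ r = {y, z} := by
        apply pair_classify (fun h => hyx h.symm) (fun h => hzx h.symm) hyz _ hr2
        rwa [← hexyz]
      rcases this with rfl | rfl | rfl
      · exact absurd hpxy.symm hrp
      · exact absurd hqxz.symm hrq
      · apply le_antisymm _ (one_le_deg he hre)
        have hsub : G.filter (fun h => ({y, z} : Finset (Fin n)) ⊆ h) ⊆ {e} := by
          intro h hmem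
          obtain ⟨hh, hrh⟩ := mem_filter.1 hmem
          rcases hsubpair _ hre (by simp) h hh hrh with rfl | rfl | rfl
          · simp
          · exact absurd (hrh (by simp)) hzf
          · exact absurd (hrh (by simp)) hyg
        exact (card_le_card hsub).trans (by simp)
    · left
      refine ⟨S, heS, hcardS, ?_, ?_⟩
      · intro h hh hne
        rcases claimH h hh hne with rfl | rfl | rfl
        · exact heS
        · exact hfS
        · exact hgS
      · have : G.filter (fun h => h ⊆ S) = {e, f, g} := by
          apply Finset.Subset.antisymm
          · intro h hmem
            obtain ⟨hh, hhS⟩ := mem_filter.1 hmem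
            have hne : (h ∩ S).Nonempty := by
              obtain ⟨t, ht⟩ := card_pos.1 (by rw [h3 h hh]; omega : 0 < h.card)
              exact ⟨t, mem_inter.2 ⟨ht, hhS ht⟩⟩
            rcases claimH h hh hne with rfl | rfl | rfl <;> simp
          · intro h hmem
            simp only [mem_insert, mem_singleton] at hmem
            rcases hmem with rfl | rfl | rfl
            · exact mem_filter.2 ⟨he, heS⟩
            · exact mem_filter.2 ⟨hfG, hfS⟩
            · exact mem_filter.2 ⟨hgG, hgS⟩
        rw [this, card_insert_of_notMem (by simp [hef, heg]), card_insert_of_notMem (by simp [hfg])]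
        simp
  · -- 5-point case
    set T : Finset (Fin n) := insert a (insert b e) with hT
    have hcardT : T.card = 5 := by
      rw [hT, card_insert_of_notMem (by simp [hab, hae]), card_insert_of_notMem hbe, he3]
    have heT : e ⊆ T := (subset_insert _ _).trans (subset_insert _ _)
    have haT : a ∈ T := mem_insert_self _ _
    have hbT : b ∈ T := mem_insert_of_mem (mem_insert_self _ _)
    have hfT : f ⊆ T := by
      rw [hfa]
      exact insert_subset haT (hpe.trans heT)
    have hgT : g ⊆ T := by
      rw [hgb]
      exact insert_subset hbT (hqe.trans heT)
    have claimH : ∀ h ∈ G, h ≠ e → h ≠ f → h ≠ g → (h ∩ T).card ≤ 1 := by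
      intro h hh hhe hhf hhg
      by_contra hcon
      push_neg at hcon
      have key := hfree64 e he f hfG g hgG h hh hef heg (Ne.symm hhe) hfg (Ne.symm hhf) (Ne.symm hhg)
      have hsub : e ∪ f ∪ g ∪ h ⊆ T ∪ h := by
        intro t ht
        simp only [mem_union] at ht ⊢
        rcases ht with ((ht | ht) | ht) | ht
        · exact Or.inl (heT ht)
        · exact Or.inl (hfT ht)
        · exact Or.inl (hgT ht)
        · exact Or.inr ht
      have h2 := card_union_add_card_inter T h
      have h3' : h.card = 3 := h3 h hh
      have h4 : 2 ≤ (T ∩ h).card := by rwa [inter_comm]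
      have : (e ∪ f ∪ g ∪ h).card ≤ 6 := by
        have := card_le_card hsub
        omega
      omega
    have hsubpair : ∀ (w : Finset (Fin n)), w ⊆ T → w.card = 2 → ∀ h ∈ G, w ⊆ h → h = e ∨ h = f ∨ h = g := by
      intro w hwT hw2 h hh hwh
      by_contra hcon
      push_neg at hcon
      obtain ⟨hhe, hhf, hhg⟩ := hcon
      have := claimH h hh hhe hhf hhg
      have hw : w ⊆ h ∩ T := fun t ht => mem_inter.2 ⟨hwh ht, hwT ht⟩
      have := card_le_card hw
      omega
    have hdegp : deg G p = 2 := by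
      apply le_antisymm _ hp2
      have hsub : G.filter (fun h => p ⊆ h) ⊆ {e, f} := by
        intro h hmem
        obtain ⟨hh, hph⟩ := mem_filter.1 hmem
        rcases hsubpair p (hpe.trans heT) hp2c h hh hph with rfl | rfl | rfl
        · simp
        · simp
        · exact absurd (hph (by rw [hpxy]; simp)) hyg
      exact (card_le_card hsub).trans ((card_insert_le _ _).trans (by simp))
    have hdegq : deg G q = 2 := by
      apply le_antisymm _ hq2
      have hsub : G.filter (fun h => q ⊆ h) ⊆ {e, g} := by
        intro h hmem
        obtain ⟨hh, hqh⟩ := mem_filter.1 hmem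
        rcases hsubpair q (hqe.trans heT) hq2c h hh hqh with rfl | rfl | rfl
        · simp
        · exact absurd (hqh (by rw [hqxz]; simp)) hzf
        · simp
      exact (card_le_card hsub).trans ((card_insert_le _ _).trans (by simp))
    refine ⟨hdegp, hdegq, ?_, ?_⟩
    · intro r hr hrp hrq
      obtain ⟨hre, hr2⟩ := mem_powersetCard.1 hr
      have : r = {x, y} ∨ r = {x, z} ∨ r = {y, z} := by
        apply pair_classify (fun h => hyx h.symm) (fun h => hzx h.symm) hyz _ hr2
        rwa [← hexyz]
      rcases this with rfl | rfl | rfl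
      · exact absurd hpxy.symm hrp
      · exact absurd hqxz.symm hrq
      · apply le_antisymm _ (one_le_deg he hre)
        have hsub : G.filter (fun h => ({y, z} : Finset (Fin n)) ⊆ h) ⊆ {e} := by
          intro h hmem
          obtain ⟨hh, hrh⟩ := mem_filter.1 hmem
          rcases hsubpair _ (hre.trans heT) hr2 h hh hrh with rfl | rfl | rfl
          · simp
          · exact absurd (hrh (by simp)) hzf
          · exact absurd (hrh (by simp)) hyg
        exact (card_le_card hsub).trans (by simp)
    · right
      constructor
      · intro f' hf'G hf'e hpf'
        have hf'f : f' = f := by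
          rcases hsubpair p (hpe.trans heT) hp2c f' hf'G hpf' with rfl | rfl | rfl
          · exact absurd rfl hf'e
          · rfl
          · exact absurd (hpf' (by rw [hpxy]; simp)) hyg
        rw [hf'f]
        rintro ⟨p1, hp1, p2, hp2', hp12, h2p1, h2p2⟩
        have hdegax : deg G ({a, x} : Finset (Fin n)) = 1 := by
          apply le_antisymm _ (one_le_deg hfG (insert_subset (by rw [hmemf]; tauto) (by simp [hxf])))
          have hsub : G.filter (fun h => ({a, x} : Finset (Fin n)) ⊆ h) ⊆ {f} := by
            intro h hmem
            obtain ⟨hh, hrh⟩ := mem_filter.1 hmem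
            have hah : a ∈ h := hrh (by simp)
            rcases hsubpair _ (insert_subset haT (by simp [heT hxe])) (card_pair hax) h hh hrh with rfl | rfl | rfl
            · exact absurd hah hae
            · simp
            · exact absurd hah (by rw [hmemg]; push_neg; exact ⟨hab, hax, haz⟩)
          exact (card_le_card hsub).trans (by simp)
        have hdegay : deg G ({a, y} : Finset (Fin n)) = 1 := by
          apply le_antisymm _ (one_le_deg hfG (insert_subset (by rw [hmemf]; tauto) (by simp [hyf])))
          have hsub : G.filter (fun h => ({a, y} : Finset (Fin n)) ⊆ h) ⊆ {f} := by
            intro h hmem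
            obtain ⟨hh, hrh⟩ := mem_filter.1 hmem
            have hah : a ∈ h := hrh (by simp)
            rcases hsubpair _ (insert_subset haT (by simp [heT hye])) (card_pair hay) h hh hrh with rfl | rfl | rfl
            · exact absurd hah hae
            · simp
            · exact absurd hah (by rw [hmemg]; push_neg; exact ⟨hab, hax, haz⟩)
          exact (card_le_card hsub).trans (by simp)
        have hfaxy : f = ({a, x, y} : Finset (Fin n)) := by rw [hfa, hpxy]
        have hclass : ∀ r ∈ f.powersetCard 2, r = ({a, x} : Finset (Fin n)) ∨ r = ({a, y} : Finset (Fin n)) ∨ r = ({x, y} : Finset (Fin n)) := by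
          intro r hr
          obtain ⟨hrf, hr2⟩ := mem_powersetCard.1 hr
          exact pair_classify hax hay (fun h => hyx h.symm) (hfaxy ▸ hrf) hr2
        rcases hclass p1 hp1 with rfl | rfl | rfl
        · omega
        · omega
        · rcases hclass p2 hp2' with rfl | rfl | rfl
          · omega
          · omega
          · exact hp12 rfl
      · intro g' hg'G hg'e hqg'
        have hg'g : g' = g := by
          rcases hsubpair q (hqe.trans heT) hq2c g' hg'G hqg' with rfl | rfl | rfl
          · exact absurd rfl hg'e
          · exact absurd (hqg' (by rw [hqxz]; simp)) hzf
          · rfl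
        rw [hg'g]
        rintro ⟨p1, hp1, p2, hp2', hp12, h2p1, h2p2⟩
        have hbnotf : b ∉ f := by rw [hmemf]; push_neg; exact ⟨fun h => hab h.symm, hbx, hby⟩
        have hdegbx : deg G ({b, x} : Finset (Fin n)) = 1 := by
          apply le_antisymm _ (one_le_deg hgG (insert_subset (by rw [hmemg]; tauto) (by simp [hxg])))
          have hsub : G.filter (fun h => ({b, x} : Finset (Fin n)) ⊆ h) ⊆ {g} := by
            intro h hmem
            obtain ⟨hh, hrh⟩ := mem_filter.1 hmem
            have hbh : b ∈ h := hrh (by simp)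
            rcases hsubpair _ (insert_subset hbT (by simp [heT hxe])) (card_pair hbx) h hh hrh with rfl | rfl | rfl
            · exact absurd hbh hbe
            · exact absurd hbh hbnotf
            · simp
          exact (card_le_card hsub).trans (by simp)
        have hdegbz : deg G ({b, z} : Finset (Fin n)) = 1 := by
          apply le_antisymm _ (one_le_deg hgG (insert_subset (by rw [hmemg]; tauto) (by simp [hzg])))
          have hsub : G.filter (fun h => ({b, z} : Finset (Fin n)) ⊆ h) ⊆ {g} := by
            intro h hmem
            obtain ⟨hh, hrh⟩ := mem_filter.1 hmem
            have hbh : b ∈ h := hrh (by simp)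
            rcases hsubpair _ (insert_subset hbT (by simp [heT hze])) (card_pair hbz) h hh hrh with rfl | rfl | rfl
            · exact absurd hbh hbe
            · exact absurd hbh hbnotf
            · simp
          exact (card_le_card hsub).trans (by simp)
        have hgbxz : g = ({b, x, z} : Finset (Fin n)) := by rw [hgb, hqxz]
        have hclass : ∀ r ∈ g.powersetCard 2, r = ({b, x} : Finset (Fin n)) ∨ r = ({b, z} : Finset (Fin n)) ∨ r = ({x, z} : Finset (Fin n)) := by
          intro r hr
          obtain ⟨hrg, hr2⟩ := mem_powersetCard.1 hr
          exact pair_classify hbx hbz (fun h => hzx h.symm) (hgbxz ▸ hrg) hr2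
        rcases hclass p1 hp1 with rfl | rfl | rfl
        · omega
        · omega
        · rcases hclass p2 hp2' with rfl | rfl | rfl
          · omega
          · omega
          · exact hp12 rfl

/-- weight of an edge -/
noncomputable def w (G : Finset (Finset (Fin n))) (e : Finset (Fin n)) : ℝ :=
  ∑ p ∈ e.powersetCard 2, ((deg G p : ℝ))⁻¹

/-- number of transfer pairs of an edge -/
def tc (G : Finset (Finset (Fin n))) (e : Finset (Fin n)) : ℕ :=
  ((e.powersetCard 2).filter (Trans G)).card

noncomputable def charge (G : Finset (Finset (Fin n))) (e : Finset (Fin n)) : ℝ :=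
  w G e + (if Multi G e then (tc G e : ℝ) else -(tc G e)) / 6

def A2 (G : Finset (Finset (Fin n))) (e : Finset (Fin n)) : ℕ :=
  ((e.powersetCard 2).filter (fun p => deg G p = 2)).card
def A3 (G : Finset (Finset (Fin n))) (e : Finset (Fin n)) : ℕ :=
  ((e.powersetCard 2).filter (fun p => 3 ≤ deg G p)).card

lemma pc2_eq (e : Finset (Fin n)) :
    e.powersetCard 2 = ((univ : Finset (Fin n)).powersetCard 2).filter (fun p => p ⊆ e) := by
  ext p
  simp only [mem_powersetCard, mem_filter, subset_univ, true_and]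
  tauto

lemma sum_indicator {α : Type*} (s : Finset α) (P : α → Prop) [DecidablePred P] (c : ℝ) :
    ∑ p ∈ s, (if P p then c else 0) = ((s.filter P).card : ℝ) * c := by
  rw [← sum_filter, sum_const, nsmul_eq_mul]

lemma sum_w_le (G : Finset (Finset (Fin n))) :
    ∑ e ∈ G, w G e ≤ (((univ : Finset (Fin n)).powersetCard 2).card : ℝ) := by
  have h1 : ∀ e ∈ G, w G e = ∑ p ∈ (univ : Finset (Fin n)).powersetCard 2,
      if p ⊆ e then ((deg G p : ℝ))⁻¹ else 0 := by
    intro e _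
    rw [w, pc2_eq, sum_filter]
  rw [sum_congr rfl h1, sum_comm]
  have h2 : ∀ p ∈ (univ : Finset (Fin n)).powersetCard 2,
      (∑ e ∈ G, if p ⊆ e then ((deg G p : ℝ))⁻¹ else 0) ≤ 1 := by
    intro p _
    rw [sum_indicator]
    show ((deg G p : ℝ)) * (deg G p : ℝ)⁻¹ ≤ 1
    rcases Nat.eq_zero_or_pos (deg G p) with h | h
    · simp [h]
    · rw [mul_inv_cancel₀ (by positivity : (deg G p : ℝ) ≠ 0)]
  calc ∑ p ∈ (univ : Finset (Fin n)).powersetCard 2, (∑ e ∈ G, if p ⊆ e then ((deg G p : ℝ))⁻¹ else 0)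
      ≤ ∑ _p ∈ (univ : Finset (Fin n)).powersetCard 2, (1:ℝ) := sum_le_sum h2
    _ = _ := by rw [sum_const, nsmul_eq_mul, mul_one]

lemma conservation (G : Finset (Finset (Fin n))) :
    ∑ e ∈ G, (if Multi G e then (tc G e : ℝ) else -(tc G e)) = 0 := by
  have h1 : ∀ e ∈ G, (if Multi G e then (tc G e : ℝ) else -(tc G e)) =
      ∑ p ∈ (univ : Finset (Fin n)).powersetCard 2,
        (if Trans G p ∧ p ⊆ e then (if Multi G e then (1:ℝ) else -1) else 0) := by
    intro e _
    rw [sum_indicator]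
    have hfil : ((univ : Finset (Fin n)).powersetCard 2).filter (fun p => Trans G p ∧ p ⊆ e)
        = (e.powersetCard 2).filter (Trans G) := by
      rw [pc2_eq e, filter_filter]
      apply filter_congr
      intro p _
      tauto
    rw [hfil]
    by_cases hM : Multi G e <;> simp [hM, tc]
  rw [sum_congr rfl h1, sum_comm]
  apply sum_eq_zero
  intro p _
  by_cases hT : Trans G p
  · obtain ⟨hd2, ⟨e₀, he₀G, hpe₀, hMe₀⟩, ⟨f₀, hf₀G, hpf₀, hMf₀⟩⟩ := hT
    have hne : e₀ ≠ f₀ := fun h => hMf₀ (h ▸ hMe₀)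
    have hfil : G.filter (fun h => p ⊆ h) = {e₀, f₀} := by
      symm
      apply eq_of_subset_of_card_le
      · intro t ht
        simp only [mem_insert, mem_singleton] at ht
        rcases ht with rfl | rfl
        · exact mem_filter.2 ⟨he₀G, hpe₀⟩
        · exact mem_filter.2 ⟨hf₀G, hpf₀⟩
      · have : (G.filter (fun h => p ⊆ h)).card = 2 := hd2
        rw [this, card_pair hne]
    have hT' : Trans G p := ⟨hd2, ⟨e₀, he₀G, hpe₀, hMe₀⟩, ⟨f₀, hf₀G, hpf₀, hMf₀⟩⟩
    calc ∑ e ∈ G, (if Trans G p ∧ p ⊆ e then (if Multi G e then (1:ℝ) else -1) else 0)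
        = ∑ e ∈ G.filter (fun e => p ⊆ e), (if Multi G e then (1:ℝ) else -1) := by
          rw [sum_filter]
          apply sum_congr rfl
          intro e _
          simp [hT']
      _ = 0 := by rw [hfil, sum_pair hne, if_pos hMe₀, if_neg hMf₀]; ring
  · apply sum_eq_zero
    intro e _
    simp [hT]

lemma w_lb {G : Finset (Finset (Fin n))}
    (h3 : ∀ e ∈ G, e.card = 3)
    (hfree64 : ∀ e₁ ∈ G, ∀ e₂ ∈ G, ∀ e₃ ∈ G, ∀ e₄ ∈ G,
      e₁ ≠ e₂ → e₁ ≠ e₃ → e₁ ≠ e₄ → e₂ ≠ e₃ → e₂ ≠ e₄ → e₃ ≠ e₄ →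
        6 < (e₁ ∪ e₂ ∪ e₃ ∪ e₄).card)
    {e : Finset (Fin n)} (he : e ∈ G) :
    3 - (A2 G e : ℝ)/2 - 2*(A3 G e : ℝ)/3 ≤ w G e := by
  have hcard : (e.powersetCard 2).card = 3 := by
    rw [card_powersetCard, h3 e he]
    decide
  have hpt : ∀ p ∈ e.powersetCard 2,
      (1:ℝ) - (if deg G p = 2 then (1:ℝ)/2 else 0) - (if 3 ≤ deg G p then (2:ℝ)/3 else 0)
        ≤ ((deg G p : ℝ))⁻¹ := by
    intro p hpp
    obtain ⟨hpe, hp2⟩ := mem_powersetCard.1 hpp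
    have h1 : 1 ≤ deg G p := one_le_deg he hpe
    have h3' : deg G p ≤ 3 := deg_le_three h3 hfree64 hp2
    interval_cases h : (deg G p) <;> norm_num
  have := sum_le_sum hpt
  have heq : ∑ p ∈ e.powersetCard 2,
      ((1:ℝ) - (if deg G p = 2 then (1:ℝ)/2 else 0) - (if 3 ≤ deg G p then (2:ℝ)/3 else 0))
      = 3 - (A2 G e : ℝ)/2 - 2*(A3 G e : ℝ)/3 := by
    rw [sum_sub_distrib, sum_sub_distrib, sum_const, sum_indicator, sum_indicator, hcard]
    unfold A2 A3
    push_cast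
    ring
  rw [heq] at this
  exact this

lemma charge_lb {G : Finset (Finset (Fin n))}
    (h3 : ∀ e ∈ G, e.card = 3)
    (hfree64 : ∀ e₁ ∈ G, ∀ e₂ ∈ G, ∀ e₃ ∈ G, ∀ e₄ ∈ G,
      e₁ ≠ e₂ → e₁ ≠ e₃ → e₁ ≠ e₄ → e₂ ≠ e₃ → e₂ ≠ e₄ → e₃ ≠ e₄ →
        6 < (e₁ ∪ e₂ ∪ e₃ ∪ e₄).card)
    {e : Finset (Fin n)} (he : e ∈ G) :
    (if Bad G e then (2:ℝ) else 7/3) ≤ charge G e := by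
  by_cases hM : Multi G e
  · have hM' := hM
    obtain ⟨p, hp, q, hq, hpq, hp2, hq2⟩ := hM
    obtain ⟨hdp, hdq, hthird, _⟩ := struct h3 hfree64 he hp hq hpq hp2 hq2
    have hA3 : A3 G e = 0 := by
      rw [A3, card_eq_zero, filter_eq_empty_iff]
      intro r hr hcon
      by_cases hrp : r = p
      · subst hrp; omega
      by_cases hrq : r = q
      · subst hrq; omega
      have := hthird r hr hrp hrq
      omega
    have hA2 : A2 G e ≤ 2 := by
      have hsub : (e.powersetCard 2).filter (fun p' => deg G p' = 2) ⊆ {p, q} := by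
        intro r hr
        obtain ⟨hrmem, hrd⟩ := mem_filter.1 hr
        by_cases hrp : r = p
        · simp [hrp]
        by_cases hrq : r = q
        · simp [hrq]
        have := hthird r hrmem hrp hrq
        omega
      exact (card_le_card hsub).trans ((card_insert_le _ _).trans (by simp))
    have hw : 2 ≤ w G e := by
      have hwl := w_lb h3 hfree64 he
      have c2 : (A2 G e : ℝ) ≤ 2 := by exact_mod_cast hA2
      have c3 : (A3 G e : ℝ) = 0 := by exact_mod_cast hA3
      rw [c3] at hwl
      linarith
    rw [charge, if_pos hM']
    by_cases hB : Bad G e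
    · rw [if_pos hB]
      have : (0:ℝ) ≤ (tc G e : ℝ) := by positivity
      linarith
    · rw [if_neg hB]
      have hpe : p ⊆ e := (mem_powersetCard.1 hp).1
      have hqe : q ⊆ e := (mem_powersetCard.1 hq).1
      have hpartner : ∀ r : Finset (Fin n), r ∈ e.powersetCard 2 → deg G r = 2 →
          ∃ f ∈ G, r ⊆ f ∧ ¬ Multi G f := by
        intro r hrmem hrd
        obtain ⟨hre, hr2⟩ := mem_powersetCard.1 hrmem
        obtain ⟨f, hfmem, hfe⟩ := exists_mem_ne
          (by have h' : deg G r = 2 := hrd; unfold deg at h'; omega : 1 < (G.filter (fun h => r ⊆ h)).card) e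
        have hfG : f ∈ G := (mem_filter.1 hfmem).1
        have hrf : r ⊆ f := (mem_filter.1 hfmem).2
        refine ⟨f, hfG, hrf, ?_⟩
        intro hMf
        apply hB
        refine ⟨hM', f, hfG, hMf, hfe, ?_⟩
        calc 2 = r.card := hr2.symm
          _ ≤ (e ∩ f).card := card_le_card (subset_inter hre hrf)
      have hTp : Trans G p := ⟨hdp, ⟨e, he, hpe, hM'⟩, hpartner p hp hdp⟩
      have hTq : Trans G q := ⟨hdq, ⟨e, he, hqe, hM'⟩, hpartner q hq hdq⟩
      have ht2 : 2 ≤ tc G e := by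
        have hsub : ({p, q} : Finset (Finset (Fin n))) ⊆ (e.powersetCard 2).filter (Trans G) := by
          intro t ht
          simp only [mem_insert, mem_singleton] at ht
          rcases ht with rfl | rfl
          · exact mem_filter.2 ⟨hp, hTp⟩
          · exact mem_filter.2 ⟨hq, hTq⟩
        calc 2 = ({p, q} : Finset (Finset (Fin n))).card := (card_pair hpq).symm
          _ ≤ tc G e := card_le_card hsub
      have : (2:ℝ) ≤ (tc G e : ℝ) := by exact_mod_cast ht2
      linarith
  · have hB : ¬ Bad G e := fun hc => hM hc.1
    rw [charge, if_neg hB, if_neg hM]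
    have hnosame : ∀ r1 ∈ e.powersetCard 2, ∀ r2 ∈ e.powersetCard 2,
        r1 ≠ r2 → 2 ≤ deg G r1 → 2 ≤ deg G r2 → False := by
      intro r1 h1 r2 h2 h12 hd1 hd2
      exact hM ⟨r1, h1, r2, h2, h12, hd1, hd2⟩
    have htc : tc G e ≤ 1 := by
      by_contra hc
      push_neg at hc
      obtain ⟨r1, hr1, r2, hr2, hne⟩ := one_lt_card.1 hc
      obtain ⟨hr1m, hT1⟩ := mem_filter.1 hr1
      obtain ⟨hr2m, hT2⟩ := mem_filter.1 hr2
      exact hnosame r1 hr1m r2 hr2m hne (le_of_eq hT1.1.symm) (le_of_eq hT2.1.symm)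
    by_cases ht0 : tc G e = 0
    · have hA23 : A2 G e + A3 G e ≤ 1 := by
        by_contra hc
        push_neg at hc
        have hA2pos : A2 G e ≠ 0 ∨ 2 ≤ A2 G e + A3 G e := by omega
        -- get two distinct heavy pairs
        have h2filter : ((e.powersetCard 2).filter (fun p => 2 ≤ deg G p)).card ≤ 1 := by
          by_contra hc2
          push_neg at hc2
          obtain ⟨r1, hr1, r2, hr2, hne⟩ := one_lt_card.1 hc2
          obtain ⟨hr1m, hd1⟩ := mem_filter.1 hr1
          obtain ⟨hr2m, hd2⟩ := mem_filter.1 hr2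
          exact hnosame r1 hr1m r2 hr2m hne hd1 hd2
        have hsub2 : (e.powersetCard 2).filter (fun p => deg G p = 2)
            ⊆ (e.powersetCard 2).filter (fun p => 2 ≤ deg G p) := by
          intro r hr
          obtain ⟨h1, h2⟩ := mem_filter.1 hr
          exact mem_filter.2 ⟨h1, by omega⟩
        have hsub3 : (e.powersetCard 2).filter (fun p => 3 ≤ deg G p)
            ⊆ (e.powersetCard 2).filter (fun p => 2 ≤ deg G p) := by
          intro r hr
          obtain ⟨h1, h2⟩ := mem_filter.1 hr
          exact mem_filter.2 ⟨h1, by omega⟩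
        have hdisj : Disjoint ((e.powersetCard 2).filter (fun p => deg G p = 2))
            ((e.powersetCard 2).filter (fun p => 3 ≤ deg G p)) := by
          rw [disjoint_left]
          intro p hp1 hp2
          have := (mem_filter.1 hp1).2
          have := (mem_filter.1 hp2).2
          omega
        have := card_union_of_disjoint hdisj
        have hsubu : ((e.powersetCard 2).filter (fun p => deg G p = 2))
            ∪ ((e.powersetCard 2).filter (fun p => 3 ≤ deg G p))
            ⊆ (e.powersetCard 2).filter (fun p => 2 ≤ deg G p) :=
          union_subset hsub2 hsub3
        have := card_le_card hsubu
        unfold A2 A3 at hc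
        omega
      have hwl := w_lb h3 hfree64 he
      have c2 : (A2 G e : ℝ) + (A3 G e : ℝ) ≤ 1 := by exact_mod_cast hA23
      have c2' : (0:ℝ) ≤ (A2 G e : ℝ) := by positivity
      have c3' : (0:ℝ) ≤ (A3 G e : ℝ) := by positivity
      rw [ht0]
      push_cast
      linarith
    · have ht1 : tc G e = 1 := by omega
      obtain ⟨p, hpmem⟩ := card_pos.1 (by have := ht1; unfold tc at this; omega : 0 < ((e.powersetCard 2).filter (Trans G)).card)
      obtain ⟨hpm, hTp⟩ := mem_filter.1 hpmem
      have hdp : deg G p = 2 := hTp.1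
      have hother : ∀ r ∈ e.powersetCard 2, r ≠ p → deg G r = 1 := by
        intro r hr hrp
        have h1 : 1 ≤ deg G r := one_le_deg he (mem_powersetCard.1 hr).1
        by_contra hc
        exact hnosame r hr p hpm hrp (by omega) (by omega)
      have hA2 : A2 G e ≤ 1 := by
        have hsub : (e.powersetCard 2).filter (fun p' => deg G p' = 2) ⊆ {p} := by
          intro r hr
          obtain ⟨hrm, hrd⟩ := mem_filter.1 hr
          by_cases hrp : r = p
          · simp [hrp]
          · have := hother r hrm hrp; omega
        exact (card_le_card hsub).trans (by simp)
      have hA3 : A3 G e = 0 := by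
        rw [A3, card_eq_zero, filter_eq_empty_iff]
        intro r hr hcon
        by_cases hrp : r = p
        · subst hrp; omega
        · have := hother r hr hrp; omega
      have hwl := w_lb h3 hfree64 he
      have c2 : (A2 G e : ℝ) ≤ 1 := by exact_mod_cast hA2
      have c3 : (A3 G e : ℝ) = 0 := by exact_mod_cast hA3
      rw [ht1]
      push_cast
      linarith

----------------- chunk 4 -----------------

lemma quad_disjoint {G : Finset (Finset (Fin n))}
    (h3 : ∀ e ∈ G, e.card = 3)
    {S S' : Finset (Fin n)} (hS : GoodQuad G S) (hS' : GoodQuad G S') (hne : S ≠ S') :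
    Disjoint S S' := by
  obtain ⟨hc4, hmeet, hcf⟩ := hS
  obtain ⟨hc4', hmeet', hcf'⟩ := hS'
  rw [disjoint_left]
  intro v hvS hvS'
  obtain ⟨e1, he1, e2, he2, he12⟩ := one_lt_card.1 (by rw [hcf]; norm_num)
  obtain ⟨he1G, he1S⟩ := mem_filter.1 he1
  obtain ⟨he2G, he2S⟩ := mem_filter.1 he2
  have hv : ∃ e ∈ G, e ⊆ S ∧ v ∈ e := by
    by_contra hno
    push_neg at hno
    have key : ∀ h ∈ G, h ⊆ S → h = S.erase v := by
      intro h hh hhS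
      apply eq_of_subset_of_card_le
      · exact subset_erase.2 ⟨hhS, hno h hh hhS⟩
      · rw [card_erase_of_mem hvS, hc4, h3 h hh]
    exact he12 ((key e1 he1G he1S).trans (key e2 he2G he2S).symm)
  obtain ⟨e, heG, heS, hve⟩ := hv
  have heS' : e ⊆ S' := hmeet' e heG ⟨v, mem_inter.2 ⟨hve, hvS'⟩⟩
  have hint3 : 3 ≤ (S ∩ S').card := by
    have h1 := card_le_card (subset_inter heS heS')
    rw [h3 e heG] at h1
    exact h1
  have hint_le : (S ∩ S').card ≤ 3 := by
    by_contra hc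
    push_neg at hc
    have h1 : S ∩ S' = S := eq_of_subset_of_card_le inter_subset_left (by omega)
    have h2 : S ⊆ S' := h1 ▸ inter_subset_right
    exact hne (eq_of_subset_of_card_le h2 (by omega))
  have hall : ∀ h ∈ G, h ⊆ S → h = S ∩ S' := by
    intro h hh hhS
    have hch : h.card = 3 := h3 h hh
    have hintc : 2 ≤ (h ∩ (S ∩ S')).card := by
      have h5 := card_union_add_card_inter h (S ∩ S')
      have h6 := card_le_card (union_subset hhS (inter_subset_left : S ∩ S' ⊆ S))
      omega
    have hne' : (h ∩ S').Nonempty := by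
      rw [← card_pos]
      have hsub : h ∩ (S ∩ S') ⊆ h ∩ S' := by
        intro t ht
        simp only [mem_inter] at ht ⊢
        tauto
      have := card_le_card hsub
      omega
    have hhS' : h ⊆ S' := hmeet' h hh hne'
    exact eq_of_subset_of_card_le (subset_inter hhS hhS') (by omega)
  exact he12 ((hall e1 he1G he1S).trans (hall e2 he2G he2S).symm)

lemma bad_good_quad {G : Finset (Finset (Fin n))}
    (h3 : ∀ e ∈ G, e.card = 3)
    (hfree64 : ∀ e₁ ∈ G, ∀ e₂ ∈ G, ∀ e₃ ∈ G, ∀ e₄ ∈ G,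
      e₁ ≠ e₂ → e₁ ≠ e₃ → e₁ ≠ e₄ → e₂ ≠ e₃ → e₂ ≠ e₄ → e₃ ≠ e₄ →
        6 < (e₁ ∪ e₂ ∪ e₃ ∪ e₄).card)
    {e : Finset (Fin n)} (he : e ∈ G) (hB : Bad G e) :
    ∃ S, e ⊆ S ∧ GoodQuad G S := by
  obtain ⟨hM, f, hfG, hMf, hfe, hcardef⟩ := hB
  obtain ⟨p, hp, q, hq, hpq, hp2, hq2⟩ := hM
  obtain ⟨hdp, hdq, hthird, hdich⟩ := struct h3 hfree64 he hp hq hpq hp2 hq2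
  rcases hdich with hleft | ⟨hright1, hright2⟩
  · exact hleft
  · exfalso
    -- e ∩ f is a heavy pair of e, equal to p or q
    have hcard_ef : (e ∩ f).card = 2 := by
      have hle : (e ∩ f).card ≤ 3 := (card_le_card inter_subset_left).trans_eq (h3 e he)
      by_cases hc : (e ∩ f).card = 3
      · exfalso
        have h1 : e ∩ f = e := eq_of_subset_of_card_le inter_subset_left (by rw [h3 e he, hc])
        have h2 : e ⊆ f := h1 ▸ inter_subset_right
        exact hfe (eq_of_subset_of_card_le h2 (by rw [h3 e he, h3 f hfG]) ).symm
      · omega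
    have hrmem : e ∩ f ∈ e.powersetCard 2 := mem_powersetCard.2 ⟨inter_subset_left, hcard_ef⟩
    have hdr : 2 ≤ deg G (e ∩ f) := by
      have hsub : ({e, f} : Finset (Finset (Fin n))) ⊆ G.filter (fun h => e ∩ f ⊆ h) := by
        intro t ht
        simp only [mem_insert, mem_singleton] at ht
        rcases ht with rfl | rfl
        · exact mem_filter.2 ⟨he, inter_subset_left⟩
        · exact mem_filter.2 ⟨hfG, inter_subset_right⟩
      calc 2 = ({e, f} : Finset (Finset (Fin n))).card := (card_pair (fun h => hfe h.symm)).symm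
        _ ≤ deg G (e ∩ f) := card_le_card hsub
    have hpq' : e ∩ f = p ∨ e ∩ f = q := by
      by_contra hc
      push_neg at hc
      have := hthird (e ∩ f) hrmem hc.1 hc.2
      omega
    rcases hpq' with hef | hef
    · exact hright1 f hfG hfe (hef ▸ inter_subset_right) hMf
    · exact hright2 f hfG hfe (hef ▸ inter_subset_right) hMf

lemma badcount {G : Finset (Finset (Fin n))}
    (h3 : ∀ e ∈ G, e.card = 3)
    (hfree64 : ∀ e₁ ∈ G, ∀ e₂ ∈ G, ∀ e₃ ∈ G, ∀ e₄ ∈ G,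
      e₁ ≠ e₂ → e₁ ≠ e₃ → e₁ ≠ e₄ → e₂ ≠ e₃ → e₂ ≠ e₄ → e₃ ≠ e₄ →
        6 < (e₁ ∪ e₂ ∪ e₃ ∪ e₄).card) :
    4 * (G.filter (Bad G)).card ≤ 3 * n := by
  set Q : Finset (Finset (Fin n)) :=
    ((univ : Finset (Fin n)).powersetCard 4).filter (GoodQuad G) with hQ
  have hsub : G.filter (Bad G) ⊆ Q.biUnion (fun S => G.filter (fun h => h ⊆ S)) := by
    intro e hemem
    obtain ⟨heG, heB⟩ := mem_filter.1 hemem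
    obtain ⟨S, heS, hGQ⟩ := bad_good_quad h3 hfree64 heG heB
    apply mem_biUnion.2
    refine ⟨S, ?_, mem_filter.2 ⟨heG, heS⟩⟩
    exact mem_filter.2 ⟨mem_powersetCard.2 ⟨subset_univ _, hGQ.1⟩, hGQ⟩
  have h1 : (G.filter (Bad G)).card ≤ 3 * Q.card := by
    calc (G.filter (Bad G)).card ≤ (Q.biUnion (fun S => G.filter (fun h => h ⊆ S))).card :=
          card_le_card hsub
      _ ≤ ∑ S ∈ Q, (G.filter (fun h => h ⊆ S)).card := card_biUnion_le
      _ = ∑ S ∈ Q, 3 := by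
          apply sum_congr rfl
          intro S hSQ
          exact ((mem_filter.1 hSQ).2).2.2
      _ = 3 * Q.card := by rw [sum_const, smul_eq_mul, mul_comm]
  have h2 : 4 * Q.card ≤ n := by
    have hdisj : ∀ S ∈ Q, ∀ S' ∈ Q, S ≠ S' → Disjoint S S' := by
      intro S hSQ S' hS'Q hne
      exact quad_disjoint h3 ((mem_filter.1 hSQ).2) ((mem_filter.1 hS'Q).2) hne
    have hbu := card_biUnion (t := fun (S : Finset (Fin n)) => S) hdisj
    have hle : (Q.biUnion (fun S => S)).card ≤ n := by
      calc (Q.biUnion (fun S => S)).card ≤ (univ : Finset (Fin n)).card :=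
            card_le_card (subset_univ _)
        _ = n := by simp
    rw [hbu] at hle
    have : ∑ S ∈ Q, S.card = ∑ S ∈ Q, 4 := by
      apply sum_congr rfl
      intro S hSQ
      exact ((mem_filter.1 hSQ).2).1
    rw [this, sum_const, smul_eq_mul, mul_comm] at hle
    exact hle
  omega

end Stmt14

/-- Any `F⁽³⁾(6,4)`-free 3-uniform hypergraph on `n` vertices has at most `(3/14)n²`
edges. -/
theorem stmt_14 (n : ℕ) (G : Finset (Finset (Fin n)))
    (h3 : ∀ e ∈ G, e.card = 3)
    (hfree64 : ∀ e₁ ∈ G, ∀ e₂ ∈ G, ∀ e₃ ∈ G, ∀ e₄ ∈ G,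
      e₁ ≠ e₂ → e₁ ≠ e₃ → e₁ ≠ e₄ → e₂ ≠ e₃ → e₂ ≠ e₄ → e₃ ≠ e₄ →
        6 < (e₁ ∪ e₂ ∪ e₃ ∪ e₄).card) :
    (G.card : ℝ) ≤ 3 / 14 * (n : ℝ) ^ 2 := by
  open Finset Stmt14 in
  have hle1 : ∑ e ∈ G, (if Stmt14.Bad G e then (2:ℝ) else 7/3) ≤ ∑ e ∈ G, Stmt14.charge G e :=
    Finset.sum_le_sum (fun e he => Stmt14.charge_lb h3 hfree64 he)
  have hch : ∑ e ∈ G, Stmt14.charge G e = ∑ e ∈ G, Stmt14.w G e := by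
    unfold Stmt14.charge
    rw [Finset.sum_add_distrib, ← Finset.sum_div, Stmt14.conservation]
    simp
  have hwle := Stmt14.sum_w_le G
  have hlhs : ∑ e ∈ G, (if Stmt14.Bad G e then (2:ℝ) else 7/3)
      = 2 * ((G.filter (Stmt14.Bad G)).card : ℝ)
        + 7/3 * ((G.filter (fun e => ¬ Stmt14.Bad G e)).card : ℝ) := by
    rw [Finset.sum_ite, Finset.sum_const, Finset.sum_const, nsmul_eq_mul, nsmul_eq_mul]
    ring
  have hsplit : (G.filter (Stmt14.Bad G)).card + (G.filter (fun e => ¬ Stmt14.Bad G e)).card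
      = G.card := Finset.card_filter_add_card_filter_not _
  have hbadc : 4 * (G.filter (Stmt14.Bad G)).card ≤ 3 * n := Stmt14.badcount h3 hfree64
  have hU2 : ((((Finset.univ : Finset (Fin n))).powersetCard 2).card : ℝ)
      = (n : ℝ) * ((n : ℝ) - 1) / 2 := by
    rw [Finset.card_powersetCard, Finset.card_univ, Fintype.card_fin]
    exact Nat.cast_choose_two ℝ n
  rw [hU2] at hwle
  rw [hlhs] at hle1
  rw [hch] at hle1
  set B := ((G.filter (Stmt14.Bad G)).card : ℝ) with hB
  set C := ((G.filter (fun e => ¬ Stmt14.Bad G e)).card : ℝ) with hC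
  have hsplit' : B + C = (G.card : ℝ) := by rw [hB, hC]; exact_mod_cast hsplit
  have hbadc' : 4 * B ≤ 3 * (n : ℝ) := by rw [hB]; exact_mod_cast hbadc
  have hCnn : (0:ℝ) ≤ C := by positivity
  have hBnn : (0:ℝ) ≤ B := by positivity
  have hnn : (0:ℝ) ≤ (n:ℝ) := by positivity
  nlinarith [hle1, hwle, hsplit', hbadc']
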